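/- Let r be an invertible octonion such that the map q_r : x ↦ r x r⁻¹ is a ring automorphism of the octonions. If r is non-real, then 4·(Re r)² = |r|². -/

import Mathlib

/-- The octonions, as the Cayley–Dickson double of the quaternions:
pairs `(a, b)` of quaternions with `(a,b)(u,v) = (au - v̄ b, b ū + v a)`. -/
@[ext] structure Oct where
  x : Quaternion ℝ
  y : Quaternion ℝ

namespace Oct

noncomputable instance : Zero Oct := ⟨⟨0, 0⟩⟩
noncomputable instance : One Oct := ⟨⟨1, 0⟩⟩
noncomputable instance : Add Oct := ⟨fun p q => ⟨p.x + q.x, p.y + q.y⟩⟩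
noncomputable instance : Neg Oct := ⟨fun p => ⟨-p.x, -p.y⟩⟩
noncomputable instance : Sub Oct := ⟨fun p q => p + -q⟩
noncomputable instance : Mul Oct := ⟨fun p q => ⟨p.x * q.x - star q.y * p.y, p.y * star q.x + q.y * p.x⟩⟩
noncomputable instance : SMul ℝ Oct := ⟨fun t p => ⟨t • p.x, t • p.y⟩⟩

/-- Octonion conjugation: `(a, b)̄ = (ā, -b)`. -/
noncomputable def conj (p : Oct) : Oct := ⟨star p.x, -p.y⟩

/-- The real part of an octonion. -/
noncomputable def re (p : Oct) : ℝ := p.x.re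

/-- The Euclidean inner product on the octonions: `⟨p, q⟩ = Re (p q̄)`. -/
noncomputable def inner (p q : Oct) : ℝ := (p * conj q).re

/-- The squared norm of an octonion. -/
noncomputable def normSq (p : Oct) : ℝ := inner p p

/-- The basic imaginary unit `i` of the octonions. -/
noncomputable def i : Oct := ⟨⟨0, 1, 0, 0⟩, 0⟩

/-- The inverse of an octonion: `r⁻¹ = r̄ / |r|²`. -/
noncomputable def inv (p : Oct) : Oct := (normSq p)⁻¹ • conj p

end Oct

namespace Oct

lemma mul_x' (p q : Oct) : (p*q).x = p.x*q.x - star q.y * p.y := rfl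
lemma mul_y' (p q : Oct) : (p*q).y = p.y * star q.x + q.y * p.x := rfl
lemma smul_x' (t : ℝ) (p : Oct) : (t • p).x = t • p.x := rfl
lemma smul_y' (t : ℝ) (p : Oct) : (t • p).y = t • p.y := rfl
lemma one_x' : (1 : Oct).x = 1 := rfl
lemma one_y' : (1 : Oct).y = 0 := rfl
lemma conj_x' (p : Oct) : (conj p).x = star p.x := rfl
lemma conj_y' (p : Oct) : (conj p).y = -p.y := rfl

lemma smul_assoc' (s t : ℝ) (p : Oct) : s • (t • p) = (s*t) • p := by
  ext <;> simp [smul_x', smul_y', mul_smul]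
lemma mul_smul_comm' (t : ℝ) (p q : Oct) : p * (t • q) = t • (p * q) := by
  ext <;> simp [smul_x', smul_y', mul_x', mul_y', mul_smul_comm, smul_mul_assoc,
    smul_sub, smul_add, Quaternion.star_smul]
lemma smul_mul_assoc' (t : ℝ) (p q : Oct) : (t • p) * q = t • (p * q) := by
  ext <;> simp [smul_x', smul_y', mul_x', mul_y', mul_smul_comm, smul_mul_assoc,
    smul_sub, smul_add]
end Oct

private lemma sum8_zero {a b c d e f g h : ℝ}
    (h0 : a^2+b^2+c^2+d^2+e^2+f^2+g^2+h^2 = 0) :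
    a=0 ∧ b=0 ∧ c=0 ∧ d=0 ∧ e=0 ∧ f=0 ∧ g=0 ∧ h=0 := by
  constructor
  · nlinarith [sq_nonneg a, sq_nonneg b, sq_nonneg c, sq_nonneg d, sq_nonneg e, sq_nonneg f, sq_nonneg g, sq_nonneg h]
  constructor
  · nlinarith [sq_nonneg a, sq_nonneg b, sq_nonneg c, sq_nonneg d, sq_nonneg e, sq_nonneg f, sq_nonneg g, sq_nonneg h]
  constructor
  · nlinarith [sq_nonneg a, sq_nonneg b, sq_nonneg c, sq_nonneg d, sq_nonneg e, sq_nonneg f, sq_nonneg g, sq_nonneg h]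
  constructor
  · nlinarith [sq_nonneg a, sq_nonneg b, sq_nonneg c, sq_nonneg d, sq_nonneg e, sq_nonneg f, sq_nonneg g, sq_nonneg h]
  constructor
  · nlinarith [sq_nonneg a, sq_nonneg b, sq_nonneg c, sq_nonneg d, sq_nonneg e, sq_nonneg f, sq_nonneg g, sq_nonneg h]
  constructor
  · nlinarith [sq_nonneg a, sq_nonneg b, sq_nonneg c, sq_nonneg d, sq_nonneg e, sq_nonneg f, sq_nonneg g, sq_nonneg h]
  constructor
  · nlinarith [sq_nonneg a, sq_nonneg b, sq_nonneg c, sq_nonneg d, sq_nonneg e, sq_nonneg f, sq_nonneg g, sq_nonneg h]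
  · nlinarith [sq_nonneg a, sq_nonneg b, sq_nonneg c, sq_nonneg d, sq_nonneg e, sq_nonneg f, sq_nonneg g, sq_nonneg h]

private lemma sum7_zero {b c d e f g h : ℝ}
    (h0 : b^2+c^2+2*d^2+e^2+2*f^2+2*g^2+3*h^2 = 0) :
    b=0 ∧ c=0 ∧ d=0 ∧ e=0 ∧ f=0 ∧ g=0 ∧ h=0 := by
  constructor
  · nlinarith [sq_nonneg b, sq_nonneg c, sq_nonneg d, sq_nonneg e, sq_nonneg f, sq_nonneg g, sq_nonneg h]
  constructor
  · nlinarith [sq_nonneg b, sq_nonneg c, sq_nonneg d, sq_nonneg e, sq_nonneg f, sq_nonneg g, sq_nonneg h]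
  constructor
  · nlinarith [sq_nonneg b, sq_nonneg c, sq_nonneg d, sq_nonneg e, sq_nonneg f, sq_nonneg g, sq_nonneg h]
  constructor
  · nlinarith [sq_nonneg b, sq_nonneg c, sq_nonneg d, sq_nonneg e, sq_nonneg f, sq_nonneg g, sq_nonneg h]
  constructor
  · nlinarith [sq_nonneg b, sq_nonneg c, sq_nonneg d, sq_nonneg e, sq_nonneg f, sq_nonneg g, sq_nonneg h]
  constructor
  · nlinarith [sq_nonneg b, sq_nonneg c, sq_nonneg d, sq_nonneg e, sq_nonneg f, sq_nonneg g, sq_nonneg h]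
  · nlinarith [sq_nonneg b, sq_nonneg c, sq_nonneg d, sq_nonneg e, sq_nonneg f, sq_nonneg g, sq_nonneg h]



lemma qlit_mul (a b c d a' b' c' d' : ℝ) :
    (@HMul.hMul (Quaternion ℝ) (Quaternion ℝ) (Quaternion ℝ) _ ⟨a,b,c,d⟩ ⟨a',b',c',d'⟩) =
      ⟨a*a' - b*b' - c*c' - d*d', a*b' + b*a' + c*d' - d*c',
        a*c' - b*d' + c*a' + d*b', a*d' + b*c' - c*b' + d*a'⟩ :=
  Quaternion.ext _ _ (Quaternion.re_mul _ _) (Quaternion.imI_mul _ _) (Quaternion.imJ_mul _ _)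
    (Quaternion.imK_mul _ _)
lemma qlit_star (a b c d : ℝ) : @Star.star (Quaternion ℝ) _ ⟨a,b,c,d⟩ = ⟨a,-b,-c,-d⟩ :=
  Quaternion.ext _ _ (Quaternion.re_star _) (Quaternion.imI_star _) (Quaternion.imJ_star _)
    (Quaternion.imK_star _)
lemma qlit_neg (a b c d : ℝ) : @Neg.neg (Quaternion ℝ) _ ⟨a,b,c,d⟩ = ⟨-a,-b,-c,-d⟩ :=
  Quaternion.ext _ _ (Quaternion.re_neg _) (Quaternion.imI_neg _) (Quaternion.imJ_neg _)
    (Quaternion.imK_neg _)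
lemma qlit_add (a b c d a' b' c' d' : ℝ) :
    (@HAdd.hAdd (Quaternion ℝ) (Quaternion ℝ) (Quaternion ℝ) _ ⟨a,b,c,d⟩ ⟨a',b',c',d'⟩) = ⟨a+a', b+b', c+c', d+d'⟩ :=
  Quaternion.ext _ _ (Quaternion.re_add _ _) (Quaternion.imI_add _ _) (Quaternion.imJ_add _ _)
    (Quaternion.imK_add _ _)
lemma qlit_sub (a b c d a' b' c' d' : ℝ) :
    (@HSub.hSub (Quaternion ℝ) (Quaternion ℝ) (Quaternion ℝ) _ ⟨a,b,c,d⟩ ⟨a',b',c',d'⟩) = ⟨a-a', b-b', c-c', d-d'⟩ :=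
  Quaternion.ext _ _ (Quaternion.re_sub _ _) (Quaternion.imI_sub _ _) (Quaternion.imJ_sub _ _)
    (Quaternion.imK_sub _ _)
lemma qlit_smul (t a b c d : ℝ) : @HSMul.hSMul ℝ (Quaternion ℝ) (Quaternion ℝ) _ t ⟨a,b,c,d⟩ = ⟨t*a, t*b, t*c, t*d⟩ :=
  Quaternion.ext _ _ (Quaternion.re_smul _ _) (Quaternion.imI_smul _ _) (Quaternion.imJ_smul _ _)
    (Quaternion.imK_smul _ _)
lemma qlit_zero : (0 : Quaternion ℝ) = ⟨0,0,0,0⟩ :=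
  Quaternion.ext _ _ Quaternion.re_zero Quaternion.imI_zero Quaternion.imJ_zero Quaternion.imK_zero
lemma qlit_one : (1 : Quaternion ℝ) = ⟨1,0,0,0⟩ :=
  Quaternion.ext _ _ Quaternion.re_one Quaternion.imI_one Quaternion.imJ_one Quaternion.imK_one

set_option maxHeartbeats 4000000

/-- If `r` is an invertible, non-real octonion such that `q_r : x ↦ r x r⁻¹` is a ring
automorphism of the octonions, then `4 (Re r)² = |r|²`. -/
theorem oct_inner_automorphism_condition (r : Oct) (hr : r ≠ 0)
    (hnonreal : ¬ ∃ t : ℝ, r = t • (1 : Oct))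
    (hadd : ∀ x y : Oct, (r * (x + y)) * Oct.inv r = (r * x) * Oct.inv r + (r * y) * Oct.inv r)
    (hmul : ∀ x y : Oct, (r * (x * y)) * Oct.inv r =
      ((r * x) * Oct.inv r) * ((r * y) * Oct.inv r))
    (hone : (r * 1) * Oct.inv r = 1)
    (hbij : Function.Bijective (fun x : Oct => (r * x) * Oct.inv r)) :
    4 * Oct.re r ^ 2 = Oct.normSq r := by
  obtain ⟨⟨a,b,c,d⟩,⟨e,f,g,h⟩⟩ := r
  set r : Oct := ⟨⟨a,b,c,d⟩,⟨e,f,g,h⟩⟩ with hrdef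
  have hN : Oct.normSq r = a^2+b^2+c^2+d^2+e^2+f^2+g^2+h^2 := by
    simp only [hrdef, Oct.normSq, Oct.inner, Oct.re, Oct.mul_x', Oct.conj_x', Oct.conj_y',
      Quaternion.re_sub, Quaternion.re_mul, Quaternion.re_star, Quaternion.imI_star,
      Quaternion.imJ_star, Quaternion.imK_star, Quaternion.re_neg, Quaternion.imI_neg,
      Quaternion.imJ_neg, Quaternion.imK_neg, qlit_mul, qlit_star, qlit_neg, qlit_add, qlit_sub, qlit_smul, qlit_zero, qlit_one]
    ring
  have hne : (a^2+b^2+c^2+d^2+e^2+f^2+g^2+h^2 : ℝ) ≠ 0 := by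
    intro h0
    apply hr
    obtain ⟨ha, hb, hc, hd, he, hf, hg, hh⟩ := sum8_zero h0
    rw [hrdef, ha, hb, hc, hd, he, hf, hg, hh]
    rfl
  have hinvsmul : (a^2+b^2+c^2+d^2+e^2+f^2+g^2+h^2) • Oct.inv r = Oct.conj r := by
    rw [Oct.inv, hN, Oct.smul_assoc', mul_inv_cancel₀ hne]
    ext <;> simp [Oct.smul_x', Oct.smul_y']
  have hmain : ∀ x y : Oct,
      (a^2+b^2+c^2+d^2+e^2+f^2+g^2+h^2) • ((r*(x*y)) * Oct.conj r)
        = ((r*x)*Oct.conj r) * ((r*y)*Oct.conj r) := by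
    intro x y
    set N : ℝ := a^2+b^2+c^2+d^2+e^2+f^2+g^2+h^2 with hNdef
    have e1 : ∀ p : Oct, p * Oct.conj r = N • (p * Oct.inv r) := by
      intro p
      rw [← hinvsmul, Oct.mul_smul_comm']
    calc N • ((r*(x*y)) * Oct.conj r)
        = (N*N) • ((r*(x*y)) * Oct.inv r) := by rw [e1, Oct.smul_assoc']
      _ = (N*N) • (((r*x)*Oct.inv r) * ((r*y)*Oct.inv r)) := by rw [hmul x y]
      _ = (N • ((r*x)*Oct.inv r)) * (N • ((r*y)*Oct.inv r)) := by
            rw [Oct.smul_mul_assoc', Oct.mul_smul_comm', Oct.smul_assoc']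
      _ = ((r*x)*Oct.conj r) * ((r*y)*Oct.conj r) := by rw [← e1, ← e1]
  have hE1 := congrArg (fun o => o.x.imK) (hmain ⟨⟨0,1,0,0⟩,0⟩ ⟨⟨0,0,1,0⟩,0⟩)
  have hE2 := congrArg (fun o => o.x.imI) (hmain ⟨0,⟨1,0,0,0⟩⟩ ⟨0,⟨0,1,0,0⟩⟩)
  have hE3 := congrArg (fun o => o.y.imJ) (hmain ⟨⟨0,0,1,0⟩,0⟩ ⟨0,⟨1,0,0,0⟩⟩)
  simp only [hrdef, Oct.mul_x', Oct.mul_y', Oct.conj_x', Oct.conj_y', Oct.smul_x', Oct.smul_y',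
    Quaternion.re_mul, Quaternion.imI_mul, Quaternion.imJ_mul, Quaternion.imK_mul,
    Quaternion.re_star, Quaternion.imI_star, Quaternion.imJ_star, Quaternion.imK_star,
    Quaternion.re_neg, Quaternion.imI_neg, Quaternion.imJ_neg, Quaternion.imK_neg,
    Quaternion.re_sub, Quaternion.imI_sub, Quaternion.imJ_sub, Quaternion.imK_sub,
    Quaternion.re_add, Quaternion.imI_add, Quaternion.imJ_add, Quaternion.imK_add,
    Quaternion.re_smul, Quaternion.imI_smul, Quaternion.imJ_smul, Quaternion.imK_smul,
    Quaternion.re_zero, Quaternion.imI_zero, Quaternion.imJ_zero, Quaternion.imK_zero,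
    smul_eq_mul, mul_zero, zero_mul, mul_one, one_mul, neg_zero, add_zero, zero_add,
    sub_zero, zero_sub, neg_neg, mul_neg, neg_mul, qlit_mul, qlit_star, qlit_neg, qlit_add, qlit_sub, qlit_smul, qlit_zero, qlit_one] at hE1 hE2 hE3
  have key : (b^2+c^2+2*d^2+e^2+2*f^2+2*g^2+3*h^2)
      * (3*a^2 - (b^2+c^2+d^2+e^2+f^2+g^2+h^2)) = 0 := by
    linear_combination (1/2)*hE1 + (1/2)*hE2 + (1/2)*hE3
  have hS : 3*a^2 - (b^2+c^2+d^2+e^2+f^2+g^2+h^2) = 0 := by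
    rcases mul_eq_zero.1 key with hq | hs
    · exfalso
      apply hnonreal
      refine ⟨a, ?_⟩
      obtain ⟨hb, hc, hd, he, hf, hg, hh⟩ := sum7_zero hq
      rw [hrdef, hb, hc, hd, he, hf, hg, hh]
      ext <;> simp [Oct.smul_x', Oct.smul_y', Oct.one_x', Oct.one_y', smul_eq_mul, qlit_mul, qlit_star, qlit_neg, qlit_add, qlit_sub, qlit_smul, qlit_zero, qlit_one]
    · exact hs
  have hre : Oct.re r = a := rfl
  rw [hre, hN]
  linarith
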